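/- Dual Pieri rule: let μ be a partition and r ≥ 0. Then in the variables x_1, …, x_m: e_r(x_1, …, x_m) · s_μ(x_1, …, x_m) = Σ_λ s_λ(x_1, …, x_m), where e_r denotes the elementary symmetric polynomial of degree r and the sum ranges over all partitions λ ⊇ μ such that λ/μ is a vertical strip of size r and ℓ(λ) ≤ m. -/

import Mathlib

open MvPolynomial

open scoped Classical

/-- The complete homogeneous symmetric polynomial `h_k` indexed by an integer,
with the convention `h_0 = 1` and `h_k = 0` for `k < 0`. -/
noncomputable def hInt (σ : Type*) [Fintype σ] [DecidableEq σ] (R : Type*) [CommRing R]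
    (k : ℤ) : MvPolynomial σ R :=
  if 0 ≤ k then hsymm σ R k.toNat else 0

/-- The Jacobi–Trudi polynomial `s_α = det (h_{α_i + j - i})` of an arbitrary integer
sequence `α`, in the variables indexed by `σ`. -/
noncomputable def jacobiTrudi (σ : Type*) [Fintype σ] [DecidableEq σ] (R : Type*) [CommRing R]
    {l : ℕ} (α : Fin l → ℤ) : MvPolynomial σ R :=
  Matrix.det (Matrix.of fun i j : Fin l => hInt σ R (α i + (j : ℕ) - (i : ℕ)))

/-- `λ/μ` is a vertical strip: `λ_i - μ_i ∈ {0, 1}` for every `i`. -/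
def IsVerticalStrip {l : ℕ} (lam μ : Fin l → ℕ) : Prop :=
  ∀ i, μ i ≤ lam i ∧ lam i ≤ μ i + 1


section DualPieriAux

open Finset

set_option linter.unusedSectionVars false

variable {σ : Type*} [Fintype σ] [DecidableEq σ] {R : Type*} [CommRing R]

noncomputable def eS (σ : Type*) [DecidableEq σ] (R : Type*) [CommRing R] (S : Finset σ)
    (j : ℕ) : MvPolynomial σ R := ∑ T ∈ Finset.powersetCard j S, ∏ i ∈ T, X i

noncomputable def hS (σ : Type*) [DecidableEq σ] (R : Type*) [CommRing R] (S : Finset σ)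
    (n : ℕ) : MvPolynomial σ R := ∑ s ∈ S.sym n, (s.1.map X).prod

theorem eS_zero (S : Finset σ) : eS σ R S 0 = 1 := by simp [eS]

theorem eS_univ [Fintype σ] (j : ℕ) : eS σ R Finset.univ j = esymm σ R j := rfl

theorem eS_eq_zero (S : Finset σ) {j : ℕ} (h : S.card < j) : eS σ R S j = 0 := by
  rw [eS, Finset.powersetCard_eq_empty.mpr h, Finset.sum_empty]

theorem hS_zero (S : Finset σ) : hS σ R S 0 = 1 := by
  simp only [hS, Finset.sym_zero, Finset.sum_singleton]
  rfl

theorem hS_univ [Fintype σ] (n : ℕ) : hS σ R Finset.univ n = hsymm σ R n := by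
  rw [hS, Finset.sym_univ, hsymm]

theorem hS_empty (n : ℕ) : hS σ R ∅ (n + 1) = 0 := by
  simp [hS]

theorem eS_insert {a : σ} {S : Finset σ} (ha : a ∉ S) (j : ℕ) :
    eS σ R (insert a S) (j + 1) = eS σ R S (j + 1) + X a * eS σ R S j := by
  have hdisj : Disjoint (Finset.powersetCard (j+1) S)
      ((Finset.powersetCard j S).image (insert a)) := by
    rw [Finset.disjoint_right]
    rintro T hT hT'
    rcases Finset.mem_image.mp hT with ⟨t, _, rfl⟩
    exact ha ((Finset.mem_powersetCard.mp hT').1 (Finset.mem_insert_self a t))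
  have hinj : ∀ T ∈ Finset.powersetCard j S, ∀ T' ∈ Finset.powersetCard j S,
      insert a T = insert a T' → T = T' := by
    intro T hT T' hT' hTT'
    have h1 : a ∉ T := fun haT => ha ((Finset.mem_powersetCard.mp hT).1 haT)
    have h2 : a ∉ T' := fun haT => ha ((Finset.mem_powersetCard.mp hT').1 haT)
    rw [← Finset.erase_insert h1, ← Finset.erase_insert h2, hTT']
  rw [eS, Finset.powersetCard_succ_insert ha, Finset.sum_union hdisj, Finset.sum_image hinj,
    eS, eS, Finset.mul_sum]
  congr 1
  exact Finset.sum_congr rfl fun T hT =>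
    Finset.prod_insert (fun haT => ha ((Finset.mem_powersetCard.mp hT).1 haT))

theorem hS_insert {a : σ} {S : Finset σ} (ha : a ∉ S) (n : ℕ) :
    hS σ R (insert a S) (n + 1) = hS σ R S (n + 1) + X a * hS σ R (insert a S) n := by
  have hsplit : (insert a S).sym (n + 1)
      = S.sym (n + 1) ∪ ((insert a S).sym n).image (Sym.cons a) := by
    ext s
    simp only [Finset.mem_union, Finset.mem_image, Finset.mem_sym_iff]
    constructor
    · intro hs
      by_cases hmem : a ∈ s
      · right
        refine ⟨s.erase a hmem, fun b hb => hs b ?_, Sym.cons_erase hmem⟩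
        have : b ∈ (s : Multiset σ).erase a := hb
        exact Multiset.mem_of_mem_erase this
      · left
        intro b hb
        rcases Finset.mem_insert.mp (hs b hb) with rfl | h
        · exact absurd hb hmem
        · exact h
    · rintro (hs | ⟨t, ht, rfl⟩)
      · intro b hb; exact Finset.mem_insert_of_mem (hs b hb)
      · intro b hb
        rcases Sym.mem_cons.mp hb with rfl | h
        · exact Finset.mem_insert_self _ _
        · exact ht b h
  have hdisj : Disjoint (S.sym (n+1)) (((insert a S).sym n).image (Sym.cons a)) := by
    rw [Finset.disjoint_right]
    rintro s hs hs'
    rcases Finset.mem_image.mp hs with ⟨t, _, rfl⟩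
    have : a ∈ Sym.cons a t := Sym.mem_cons_self a t
    exact ha ((Finset.mem_sym_iff.mp hs') a this)
  have hinj : ∀ s ∈ (insert a S).sym n, ∀ t ∈ (insert a S).sym n,
      Sym.cons a s = Sym.cons a t → s = t := by
    intro s _ t _ hst
    exact (Sym.cons_inj_right a s t).mp hst
  rw [hS, hsplit, Finset.sum_union hdisj, Finset.sum_image hinj, hS, hS, Finset.mul_sum]
  congr 1
  refine Finset.sum_congr rfl fun s _ => ?_
  rw [Sym.cons, Multiset.map_cons, Multiset.prod_cons]

noncomputable def eZ (σ : Type*) [DecidableEq σ] (R : Type*) [CommRing R] (S : Finset σ)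
    (j : ℤ) : MvPolynomial σ R := if 0 ≤ j then eS σ R S j.toNat else 0

noncomputable def hZ (σ : Type*) [DecidableEq σ] (R : Type*) [CommRing R] (S : Finset σ)
    (n : ℤ) : MvPolynomial σ R := if 0 ≤ n then hS σ R S n.toNat else 0

theorem eZ_neg {S : Finset σ} {j : ℤ} (h : j < 0) : eZ σ R S j = 0 := by
  rw [eZ, if_neg (by omega)]

theorem hZ_neg {S : Finset σ} {n : ℤ} (h : n < 0) : hZ σ R S n = 0 := by
  rw [hZ, if_neg (by omega)]

theorem eZ_ofNat (S : Finset σ) (j : ℕ) : eZ σ R S (j : ℤ) = eS σ R S j := by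
  rw [eZ, if_pos (by omega), Int.toNat_natCast]

theorem hZ_ofNat (S : Finset σ) (n : ℕ) : hZ σ R S (n : ℤ) = hS σ R S n := by
  rw [hZ, if_pos (by omega), Int.toNat_natCast]

theorem eZ_zero (S : Finset σ) : eZ σ R S 0 = 1 := by
  rw [show (0:ℤ) = ((0:ℕ):ℤ) by norm_num, eZ_ofNat, eS_zero]

theorem hZ_zero (S : Finset σ) : hZ σ R S 0 = 1 := by
  rw [show (0:ℤ) = ((0:ℕ):ℤ) by norm_num, hZ_ofNat, hS_zero]

theorem eZ_eq_zero {S : Finset σ} {j : ℤ} (h : (S.card : ℤ) < j) : eZ σ R S j = 0 := by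
  rw [eZ, if_pos (by omega), eS_eq_zero _ (by omega)]

/-- Total recurrence for elementary symmetric polynomials under `insert`. -/
theorem eZ_insert {a : σ} {S : Finset σ} (ha : a ∉ S) (j : ℤ) :
    eZ σ R (insert a S) j = eZ σ R S j + X a * eZ σ R S (j - 1) := by
  rcases lt_trichotomy j 0 with h | rfl | h
  · rw [eZ_neg h, eZ_neg h, eZ_neg (by omega), mul_zero, add_zero]
  · rw [eZ_zero, eZ_zero, eZ_neg (by omega), mul_zero, add_zero]
  · obtain ⟨k, rfl⟩ : ∃ k : ℕ, j = (k : ℤ) + 1 := ⟨(j - 1).toNat, by omega⟩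
    rw [show (k : ℤ) + 1 - 1 = (k : ℤ) by ring, show ((k:ℤ)+1) = ((k+1 : ℕ) : ℤ) by push_cast; ring,
      eZ_ofNat, eZ_ofNat, eZ_ofNat, eS_insert ha]

/-- Total recurrence for complete homogeneous symmetric polynomials under `insert`. -/
theorem hZ_insert {a : σ} {S : Finset σ} (ha : a ∉ S) (n : ℤ) :
    hZ σ R (insert a S) n = hZ σ R S n + X a * hZ σ R (insert a S) (n - 1) := by
  rcases lt_trichotomy n 0 with h | rfl | h
  · rw [hZ_neg h, hZ_neg h, hZ_neg (by omega), mul_zero, add_zero]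
  · rw [hZ_zero, hZ_zero, hZ_neg (by omega), mul_zero, add_zero]
  · obtain ⟨k, rfl⟩ : ∃ k : ℕ, n = (k : ℤ) + 1 := ⟨(n - 1).toNat, by omega⟩
    rw [show (k : ℤ) + 1 - 1 = (k : ℤ) by ring, show ((k:ℤ)+1) = ((k+1 : ℕ) : ℤ) by push_cast; ring,
      hZ_ofNat, hZ_ofNat, hZ_ofNat, hS_insert ha]

/-- The fundamental identity relating `e` and `h`:
`∑_{j=0}^{n} (-1)^j e_j h_{n-j} = [n = 0]`. -/
theorem eh_identity (S : Finset σ) (n : ℕ) :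
    ∑ j ∈ Finset.range (n + 1), (-1 : MvPolynomial σ R) ^ j * eZ σ R S j * hZ σ R S (n - j) =
      if n = 0 then 1 else 0 := by
  induction S using Finset.induction_on generalizing n with
  | empty =>
    have he : ∀ j : ℕ, eZ σ R (∅ : Finset σ) j = if j = 0 then 1 else 0 := by
      intro j
      cases j with
      | zero => rw [if_pos rfl]; exact_mod_cast eZ_zero _
      | succ k => rw [eZ_ofNat, eS_eq_zero _ (by simp), if_neg (by omega)]
    rw [Finset.sum_eq_single 0]
    · rw [he, if_pos rfl, pow_zero, one_mul, one_mul, Nat.cast_zero, sub_zero]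
      cases n with
      | zero => rw [Nat.cast_zero, hZ_zero, if_pos rfl]
      | succ k => rw [hZ_ofNat, hS_empty, if_neg (by omega)]
    · intro j _ hj
      rw [he, if_neg hj, mul_zero, zero_mul]
    · intro h
      exact absurd (Finset.mem_range.mpr (by omega)) h
  | @insert a S₀ ha IH =>
    induction n with
    | zero =>
      rw [Finset.sum_range_one, pow_zero, one_mul, Nat.cast_zero, sub_zero, eZ_zero, one_mul,
        hZ_zero, if_pos rfl]
    | succ n IHn =>
      have split_h : ∀ j ∈ Finset.range (n + 2),
          (-1 : MvPolynomial σ R) ^ j * eZ σ R (insert a S₀) j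
              * hZ σ R (insert a S₀) ((n + 1 : ℕ) - j)
            = (-1 : MvPolynomial σ R) ^ j * eZ σ R (insert a S₀) j * hZ σ R S₀ ((n + 1 : ℕ) - j)
              + X a * ((-1 : MvPolynomial σ R) ^ j * eZ σ R (insert a S₀) j
                  * hZ σ R (insert a S₀) ((n : ℕ) - j)) := by
        intro j _
        rw [hZ_insert ha (((n + 1 : ℕ) : ℤ) - j),
          show ((n + 1 : ℕ) : ℤ) - (j:ℕ) - 1 = ((n : ℕ) : ℤ) - (j:ℕ) by push_cast; ring]
        ring
      rw [Finset.sum_congr rfl split_h, Finset.sum_add_distrib, ← Finset.mul_sum]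
      have sum2 : ∑ j ∈ Finset.range (n + 2),
          (-1 : MvPolynomial σ R) ^ j * eZ σ R (insert a S₀) j * hZ σ R (insert a S₀) ((n:ℕ) - j)
            = if n = 0 then 1 else 0 := by
        rw [Finset.sum_range_succ, hZ_neg (by omega), mul_zero, add_zero, IHn]
      have split_e : ∀ j ∈ Finset.range (n + 2),
          (-1 : MvPolynomial σ R) ^ j * eZ σ R (insert a S₀) j * hZ σ R S₀ ((n + 1 : ℕ) - j)
            = (-1 : MvPolynomial σ R) ^ j * eZ σ R S₀ j * hZ σ R S₀ ((n + 1 : ℕ) - j)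
              + X a * ((-1 : MvPolynomial σ R) ^ j * eZ σ R S₀ (j - 1)
                  * hZ σ R S₀ ((n + 1 : ℕ) - j)) := by
        intro j _
        rw [eZ_insert ha (j : ℤ)]
        ring
      have sum3 : ∑ j ∈ Finset.range (n + 2),
          (-1 : MvPolynomial σ R) ^ j * eZ σ R S₀ ((j : ℤ) - 1) * hZ σ R S₀ ((n + 1 : ℕ) - j)
            = - (if n = 0 then 1 else 0) := by
        rw [Finset.sum_range_succ']
        simp only [Nat.cast_zero, Nat.cast_add, Nat.cast_one]
        rw [show (0:ℤ) - 1 = -1 by ring, eZ_neg (by omega), mul_zero, zero_mul, add_zero]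
        rw [← IH n, ← Finset.sum_neg_distrib]
        refine Finset.sum_congr rfl fun j _ => ?_
        rw [show ((j:ℤ) + 1 - 1) = (j:ℤ) by ring, pow_succ]
        rw [show ((n:ℤ) + 1 - ((j:ℤ) + 1)) = (n:ℤ) - j by ring]
        ring
      rw [Finset.sum_congr rfl split_e, Finset.sum_add_distrib, ← Finset.mul_sum]
      have sum1 : ∑ j ∈ Finset.range (n + 2),
          (-1 : MvPolynomial σ R) ^ j * eZ σ R S₀ j * hZ σ R S₀ ((n + 1 : ℕ) - j)
            = 0 := by
        rw [IH (n + 1), if_neg (by omega)]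
      rw [sum1, sum2]
      push_cast at sum3 ⊢
      rw [sum3]
      simp

/-- Truncated version of the `e`-`h` identity: the summation range may be any `N ≥ |S|`,
and the degree may be any integer. -/
theorem eh_identity_trunc (S : Finset σ) {N : ℕ} (hN : S.card ≤ N) (n : ℤ) :
    ∑ j ∈ Finset.range (N + 1), (-1 : MvPolynomial σ R) ^ j * eZ σ R S j * hZ σ R S (n - j) =
      if n = 0 then 1 else 0 := by
  rcases lt_or_ge n 0 with hn | hn
  · rw [if_neg (by omega)]
    refine Finset.sum_eq_zero fun j _ => ?_
    rw [hZ_neg (by omega), mul_zero]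
  · obtain ⟨n₀, rfl⟩ := Int.eq_ofNat_of_zero_le hn
    have key : ∀ K : ℕ, N ≤ K →
        ∑ j ∈ Finset.range (N + 1),
            (-1 : MvPolynomial σ R) ^ j * eZ σ R S j * hZ σ R S ((n₀ : ℤ) - j)
          = ∑ j ∈ Finset.range (K + 1),
            (-1 : MvPolynomial σ R) ^ j * eZ σ R S j * hZ σ R S ((n₀ : ℤ) - j) := by
      intro K hK
      refine Finset.sum_subset (Finset.range_subset_range.mpr (by omega)) fun j _ hj => ?_
      rw [Finset.mem_range, not_lt] at hj
      rw [eZ_eq_zero (by omega), mul_zero, zero_mul]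
    have key2 :
        ∑ j ∈ Finset.range (n₀ + 1),
            (-1 : MvPolynomial σ R) ^ j * eZ σ R S j * hZ σ R S ((n₀ : ℤ) - j)
          = ∑ j ∈ Finset.range (max N n₀ + 1),
            (-1 : MvPolynomial σ R) ^ j * eZ σ R S j * hZ σ R S ((n₀ : ℤ) - j) := by
      refine Finset.sum_subset (Finset.range_subset_range.mpr (by omega)) fun j hj' hj => ?_
      rw [Finset.mem_range, not_lt] at hj
      rw [hZ_neg (by omega), mul_zero]
    rw [key (max N n₀) (le_max_left _ _), ← key2, eh_identity]
    simp only [Nat.cast_eq_zero]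

/-- The key identity `∑_j (-1)^j e_j(x ∖ x_k) h_{n-j}(x) = x_k^n`. -/
theorem phi_lemma (k : σ) (n : ℤ) :
    ∑ j ∈ Finset.range (Fintype.card σ + 1),
        (-1 : MvPolynomial σ R) ^ j * eZ σ R (Finset.univ.erase k) j
          * hZ σ R Finset.univ (n - j)
      = if 0 ≤ n then X k ^ n.toNat else 0 := by
  set N := Fintype.card σ with hNdef
  have hNpos : 1 ≤ N := by
    have := Fintype.card_pos_iff.mpr ⟨k⟩
    omega
  have hcard : (Finset.univ.erase k).card = N - 1 := by
    rw [Finset.card_erase_of_mem (Finset.mem_univ k), Finset.card_univ]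
  have hrec : ∀ nn : ℤ,
      (∑ j ∈ Finset.range (N + 1), (-1 : MvPolynomial σ R) ^ j
          * eZ σ R (Finset.univ.erase k) j * hZ σ R Finset.univ (nn - j))
        = (if nn = 0 then 1 else 0)
          + X k * ∑ j ∈ Finset.range (N + 1), (-1 : MvPolynomial σ R) ^ j
              * eZ σ R (Finset.univ.erase k) j * hZ σ R Finset.univ (nn - 1 - j) := by
    intro nn
    have huniv : insert k (Finset.univ.erase k) = (Finset.univ : Finset σ) :=
      Finset.insert_erase (Finset.mem_univ k)
    have hsplit : ∀ j ∈ Finset.range (N + 1),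
        (-1 : MvPolynomial σ R) ^ j * eZ σ R Finset.univ j * hZ σ R Finset.univ (nn - j)
          = (-1 : MvPolynomial σ R) ^ j * eZ σ R (Finset.univ.erase k) j
              * hZ σ R Finset.univ (nn - j)
            + X k * ((-1 : MvPolynomial σ R) ^ j * eZ σ R (Finset.univ.erase k) ((j : ℤ) - 1)
                * hZ σ R Finset.univ (nn - j)) := by
      intro j _
      have hins := eZ_insert (R := R) (Finset.notMem_erase k Finset.univ) (j : ℤ)
      rw [huniv] at hins
      rw [hins]
      ring
    have main := eh_identity_trunc (R := R) (Finset.univ : Finset σ)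
      (by rw [Finset.card_univ]) nn
    rw [Finset.sum_congr rfl hsplit, Finset.sum_add_distrib, ← Finset.mul_sum] at main
    have hsum2 : ∑ j ∈ Finset.range (N + 1), (-1 : MvPolynomial σ R) ^ j
          * eZ σ R (Finset.univ.erase k) ((j : ℤ) - 1) * hZ σ R Finset.univ (nn - j)
        = - ∑ j ∈ Finset.range (N + 1), (-1 : MvPolynomial σ R) ^ j
            * eZ σ R (Finset.univ.erase k) j * hZ σ R Finset.univ (nn - 1 - j) := by
      rw [Finset.sum_range_succ']
      rw [Nat.cast_zero, show (0 : ℤ) - 1 = -1 by ring, eZ_neg (by omega), mul_zero, zero_mul,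
        add_zero]
      conv_rhs => rw [Finset.sum_range_succ]
      rw [eZ_eq_zero (by omega : ((Finset.univ.erase k).card : ℤ) < (N : ℤ)), mul_zero, zero_mul,
        add_zero, ← Finset.sum_neg_distrib]
      refine Finset.sum_congr rfl fun j _ => ?_
      rw [show ((j + 1 : ℕ) : ℤ) - 1 = (j : ℤ) by push_cast; ring, pow_succ,
        show nn - ((j + 1 : ℕ) : ℤ) = nn - 1 - j by push_cast; ring]
      ring
    rw [hsum2] at main
    linear_combination main
  rcases lt_or_ge n 0 with hn | hn
  · rw [if_neg (by omega)]
    refine Finset.sum_eq_zero fun j _ => ?_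
    rw [hZ_neg (by omega), mul_zero]
  · obtain ⟨n₀, rfl⟩ := Int.eq_ofNat_of_zero_le hn
    induction n₀ with
    | zero =>
      rw [Nat.cast_zero, hrec 0, if_pos rfl, if_pos (by omega)]
      have : ∑ j ∈ Finset.range (N + 1), (-1 : MvPolynomial σ R) ^ j
          * eZ σ R (Finset.univ.erase k) j * hZ σ R Finset.univ ((0 : ℤ) - 1 - j) = 0 :=
        Finset.sum_eq_zero fun j _ => by rw [hZ_neg (by omega), mul_zero]
      rw [this, mul_zero, add_zero]
      norm_num
    | succ n₀ IHn =>
      rw [hrec ((n₀ + 1 : ℕ) : ℤ), if_neg (by omega), zero_add,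
        show ((n₀ + 1 : ℕ) : ℤ) - 1 = ((n₀ : ℕ) : ℤ) by push_cast; ring,
        IHn (by omega), if_pos (by omega), if_pos (by omega)]
      rw [Int.toNat_natCast, Int.toNat_natCast, pow_succ]
      ring

theorem hInt_eq_hZ (k : ℤ) : hInt σ R k = hZ σ R Finset.univ k := by
  unfold hInt hZ
  rw [hS_univ]

/-- The Jacobi–Trudi matrix times the matrix of signed elementary symmetric polynomials
in all-but-one variables equals the alternant matrix. -/
theorem jt_matrix_mul (m : ℕ) (ν : Fin m → ℕ) :
    (Matrix.of fun i j : Fin m => hInt (Fin m) R ((ν i : ℤ) + (j : ℕ) - (i : ℕ)))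
        * (Matrix.of fun j k : Fin m =>
          (-1 : MvPolynomial (Fin m) R) ^ (m - 1 - (j : ℕ))
            * eZ (Fin m) R (Finset.univ.erase k) ((m - 1 - (j : ℕ) : ℕ) : ℤ))
      = Matrix.of fun i k : Fin m =>
          (X k : MvPolynomial (Fin m) R) ^ (ν i + (m - 1 - (i : ℕ))) := by
  ext i k
  have hm : 0 < m := k.pos
  rw [Matrix.mul_apply]
  simp only [Matrix.of_apply]
  set n : ℤ := ((ν i + (m - 1 - (i : ℕ)) : ℕ) : ℤ) with hn
  set g : ℕ → MvPolynomial (Fin m) R := fun j =>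
    hInt (Fin m) R ((ν i : ℤ) + (j : ℕ) - (i : ℕ))
      * ((-1 : MvPolynomial (Fin m) R) ^ (m - 1 - j)
        * eZ (Fin m) R (Finset.univ.erase k) ((m - 1 - j : ℕ) : ℤ)) with hg
  have step1 : ∑ j : Fin m, hInt (Fin m) R ((ν i : ℤ) + (j : ℕ) - (i : ℕ))
      * ((-1 : MvPolynomial (Fin m) R) ^ (m - 1 - (j : ℕ))
        * eZ (Fin m) R (Finset.univ.erase k) ((m - 1 - (j : ℕ) : ℕ) : ℤ))
      = ∑ j ∈ Finset.range m, g j := Fin.sum_univ_eq_sum_range (fun j => g j) m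
  rw [step1, ← Finset.sum_range_reflect]
  have hterm : ∀ t ∈ Finset.range m, g (m - 1 - t)
      = (-1 : MvPolynomial (Fin m) R) ^ t * eZ (Fin m) R (Finset.univ.erase k) (t : ℤ)
        * hZ (Fin m) R Finset.univ (n - t) := by
    intro t ht
    rw [Finset.mem_range] at ht
    have h1 : m - 1 - (m - 1 - t) = t := by omega
    have h2 : ((m - 1 - (m - 1 - t) : ℕ) : ℤ) = (t : ℤ) := by rw [h1]
    have h3 : ((ν i : ℤ) + ((m - 1 - t : ℕ) : ℕ) - (i : ℕ)) = n - t := by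
      rw [hn]; push_cast; omega
    rw [hg]
    simp only []
    rw [h1, h3, hInt_eq_hZ]
    ring
  rw [Finset.sum_congr rfl hterm]
  have hext : ∑ t ∈ Finset.range m,
        (-1 : MvPolynomial (Fin m) R) ^ t * eZ (Fin m) R (Finset.univ.erase k) (t : ℤ)
          * hZ (Fin m) R Finset.univ (n - t)
      = ∑ t ∈ Finset.range (m + 1),
        (-1 : MvPolynomial (Fin m) R) ^ t * eZ (Fin m) R (Finset.univ.erase k) (t : ℤ)
          * hZ (Fin m) R Finset.univ (n - t) := by
    rw [Finset.sum_range_succ]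
    have hcard : ((Finset.univ.erase k).card : ℤ) < (m : ℤ) := by
      rw [Finset.card_erase_of_mem (Finset.mem_univ k), Finset.card_univ, Fintype.card_fin]
      omega
    rw [eZ_eq_zero hcard, mul_zero, zero_mul, add_zero]
  rw [hext]
  have := phi_lemma (R := R) (σ := Fin m) k n
  rw [Fintype.card_fin] at this
  rw [this, if_pos (by rw [hn]; omega), hn, Int.toNat_natCast]

theorem det_hInt_triangular (m : ℕ) :
    (Matrix.of fun i j : Fin m =>
      hInt (Fin m) R (((0 : ℕ) : ℤ) + (j : ℕ) - (i : ℕ))).det = 1 := by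
  have htri : (Matrix.of fun i j : Fin m =>
      hInt (Fin m) R (((0 : ℕ) : ℤ) + (j : ℕ) - (i : ℕ))).BlockTriangular id := by
    intro i j hij
    simp only [Matrix.of_apply]
    rw [hInt, if_neg]
    have : (j : ℕ) < (i : ℕ) := hij
    omega
  rw [Matrix.det_of_upperTriangular htri]
  refine Finset.prod_eq_one fun i _ => ?_
  simp only [Matrix.of_apply]
  rw [show ((0 : ℕ) : ℤ) + (i : ℕ) - (i : ℕ) = 0 by ring, hInt, if_pos le_rfl]
  exact hsymm_zero (Fin m) R

/-- The alternant form of the Jacobi–Trudi polynomial: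
`a_δ ⬝ s_ν = a_{ν + δ}` with `δ = (m-1, m-2, …, 0)`. -/
theorem alt_jacobiTrudi (m : ℕ) (ν : Fin m → ℕ) :
    (Matrix.of fun i k : Fin m =>
        (X k : MvPolynomial (Fin m) R) ^ (m - 1 - (i : ℕ))).det
      * jacobiTrudi (Fin m) R (fun i => (ν i : ℤ))
    = (Matrix.of fun i k : Fin m =>
        (X k : MvPolynomial (Fin m) R) ^ (ν i + (m - 1 - (i : ℕ)))).det := by
  have e1 := congrArg Matrix.det (jt_matrix_mul (R := R) m ν)
  have e0 := congrArg Matrix.det (jt_matrix_mul (R := R) m (fun _ => 0))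
  rw [Matrix.det_mul] at e1 e0
  rw [det_hInt_triangular, one_mul] at e0
  have h0 : (Matrix.of fun i k : Fin m =>
      (X k : MvPolynomial (Fin m) R) ^ ((0 : ℕ) + (m - 1 - (i : ℕ)))).det
      = (Matrix.of fun i k : Fin m =>
        (X k : MvPolynomial (Fin m) R) ^ (m - 1 - (i : ℕ))).det := by
    exact congrArg Matrix.det (Matrix.ext fun i k => by rw [Matrix.of_apply, Matrix.of_apply,
      Nat.zero_add])
  rw [h0] at e0
  rw [jacobiTrudi, ← e0, mul_comm]
  exact e1

/-- Multiplying an alternant by `e_r` and expanding over subsets: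
the column-indicators can be traded for row-indicators. -/
theorem pieri_raw (m r : ℕ) (β : Fin m → ℕ) :
    esymm (Fin m) R r
        * (Matrix.of fun i k : Fin m => (X k : MvPolynomial (Fin m) R) ^ β i).det
      = ∑ T ∈ Finset.powersetCard r (Finset.univ : Finset (Fin m)),
          (Matrix.of fun i k : Fin m =>
            (X k : MvPolynomial (Fin m) R) ^ (β i + if i ∈ T then 1 else 0)).det := by
  rw [esymm, Finset.sum_mul]
  have step1 : ∀ T ∈ Finset.powersetCard r (Finset.univ : Finset (Fin m)),
      (∏ k ∈ T, (X k : MvPolynomial (Fin m) R))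
          * (Matrix.of fun i k : Fin m => (X k : MvPolynomial (Fin m) R) ^ β i).det
        = (Matrix.of fun i k : Fin m =>
            (X k : MvPolynomial (Fin m) R) ^ (β i + if k ∈ T then 1 else 0)).det := by
    intro T _
    have hv := Matrix.det_mul_row
      (fun k : Fin m => if k ∈ T then (X k : MvPolynomial (Fin m) R) else 1)
      (Matrix.of fun i k : Fin m => (X k : MvPolynomial (Fin m) R) ^ β i)
    have hprod : (∏ k : Fin m, (if k ∈ T then (X k : MvPolynomial (Fin m) R) else 1))
        = ∏ k ∈ T, (X k : MvPolynomial (Fin m) R) := by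
      rw [Finset.prod_ite_mem, Finset.univ_inter]
    have hentry : (Matrix.of fun i k : Fin m =>
          (if k ∈ T then (X k : MvPolynomial (Fin m) R) else 1)
            * (Matrix.of fun i' k' : Fin m =>
                (X k' : MvPolynomial (Fin m) R) ^ β i') i k)
        = (Matrix.of fun i k : Fin m =>
            (X k : MvPolynomial (Fin m) R) ^ (β i + if k ∈ T then 1 else 0)) :=
      Matrix.ext fun i k => by
        by_cases h : k ∈ T <;> simp [h, pow_succ, mul_comm]
    rw [← hprod, ← hv, hentry]
  rw [Finset.sum_congr rfl step1]
  simp only [Matrix.det_apply, Matrix.of_apply]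
  rw [Finset.sum_comm]
  conv_rhs => rw [Finset.sum_comm]
  refine Finset.sum_congr rfl fun σp _ => ?_
  refine Finset.sum_bij' (fun T _ => T.map σp.toEmbedding)
    (fun T _ => T.map σp.symm.toEmbedding) ?_ ?_ ?_ ?_ ?_
  · intro T hT
    rw [Finset.mem_powersetCard_univ] at hT ⊢
    rw [Finset.card_map, hT]
  · intro T hT
    rw [Finset.mem_powersetCard_univ] at hT ⊢
    rw [Finset.card_map, hT]
  · intro T _
    ext x
    simp [Finset.mem_map_equiv]
  · intro T _
    ext x
    simp [Finset.mem_map_equiv]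
  · intro T _
    simp only [Finset.mem_map_equiv, Equiv.symm_apply_apply]

theorem det_V0_ne_zero (m : ℕ) :
    (Matrix.of fun i k : Fin m =>
      (X k : MvPolynomial (Fin m) ℤ) ^ (m - 1 - (i : ℕ))).det ≠ 0 := by
  have hdet : (Matrix.of fun i k : Fin m =>
        (X k : MvPolynomial (Fin m) ℤ) ^ (m - 1 - (i : ℕ))).det
      = (Equiv.Perm.sign (Fin.revPerm : Equiv.Perm (Fin m)) : ℤ)
        * (Matrix.vandermonde fun k : Fin m => (X k : MvPolynomial (Fin m) ℤ)).det := by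
    rw [← Matrix.det_transpose, ← Matrix.det_permute' Fin.revPerm]
    congr 1
    ext k i
    simp only [Matrix.transpose_apply, Matrix.of_apply, Matrix.submatrix_apply,
      Matrix.vandermonde_apply, id_eq]
    have h : (m : ℕ) - 1 - (i : ℕ) = ((Fin.revPerm i : Fin m) : ℕ) := by
      rw [Fin.revPerm_apply, Fin.val_rev]
      omega
    rw [h]
  rw [hdet]
  have hv : (Matrix.vandermonde fun k : Fin m => (X k : MvPolynomial (Fin m) ℤ)).det ≠ 0 := by
    rw [Matrix.det_vandermonde]
    rw [Finset.prod_ne_zero_iff]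
    intro i _
    rw [Finset.prod_ne_zero_iff]
    intro j hj
    rw [Finset.mem_Ioi] at hj
    exact sub_ne_zero.mpr fun h => absurd (MvPolynomial.X_injective h) (ne_of_gt hj)
  rcases Int.units_eq_one_or (Equiv.Perm.sign (Fin.revPerm : Equiv.Perm (Fin m))) with h | h <;>
    rw [h] <;> simpa using hv

theorem exists_adjacent_of_not_antitone {m : ℕ} {f : Fin m → ℕ} (h : ¬ Antitone f) :
    ∃ i : Fin m, ∃ hi : (i : ℕ) + 1 < m, f i < f ⟨(i : ℕ) + 1, hi⟩ := by
  cases m with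
  | zero => exact absurd (fun i => i.elim0) h
  | succ n =>
    rw [Fin.antitone_iff_succ_le] at h
    push_neg at h
    obtain ⟨i, hi⟩ := h
    have hval : ((Fin.castSucc i : Fin (n + 1)) : ℕ) = (i : ℕ) := rfl
    have hlt : (i : ℕ) < n := i.isLt
    refine ⟨Fin.castSucc i, by omega, ?_⟩
    have heq : (⟨((Fin.castSucc i : Fin (n + 1)) : ℕ) + 1, by omega⟩ : Fin (n + 1)) = i.succ := by
      ext
      simp [hval]
    rw [heq]
    exact hi

theorem bad_det_zero {m : ℕ} (ν : Fin m → ℕ) (hν : Antitone ν) (T : Finset (Fin m))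
    (hbad : ¬ Antitone fun i => ν i + if i ∈ T then 1 else 0) :
    (Matrix.of fun i k : Fin m => (X k : MvPolynomial (Fin m) R)
      ^ ((ν i + (m - 1 - (i : ℕ))) + if i ∈ T then 1 else 0)).det = 0 := by
  obtain ⟨i, hi, hlt⟩ := exists_adjacent_of_not_antitone hbad
  set i' : Fin m := ⟨(i : ℕ) + 1, hi⟩ with hi'
  have hνle : ν i' ≤ ν i := hν (by rw [Fin.le_def]; simp [hi'])
  have hind : (if i ∈ T then 1 else 0) ≤ 1 ∧ (if i' ∈ T then 1 else 0) ≤ 1 := by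
    constructor <;> split <;> omega
  have hexp : (ν i + (m - 1 - (i : ℕ))) + (if i ∈ T then 1 else 0)
      = (ν i' + (m - 1 - (i' : ℕ))) + (if i' ∈ T then 1 else 0) := by
    have h1 : ν i + (if i ∈ T then 1 else 0) < ν i' + (if i' ∈ T then 1 else 0) := hlt
    have h2 : (i' : ℕ) = (i : ℕ) + 1 := rfl
    omega
  refine Matrix.det_zero_of_row_eq (i := i) (j := i') (fun h => by
    have := congrArg Fin.val h
    omega) ?_
  funext k
  simp only [Matrix.of_apply]
  rw [hexp]

/-- The dual Pieri rule at full length `m`, over `ℤ`. -/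
theorem pieri_m_int (m r : ℕ) (ν : Fin m → ℕ) (hν : Antitone ν) :
    esymm (Fin m) ℤ r * jacobiTrudi (Fin m) ℤ (fun i => (ν i : ℤ))
      = ∑ T ∈ (Finset.powersetCard r (Finset.univ : Finset (Fin m))).filter
            (fun T => Antitone fun i => ν i + if i ∈ T then 1 else 0),
          jacobiTrudi (Fin m) ℤ (fun i => ((ν i + if i ∈ T then 1 else 0 : ℕ) : ℤ)) := by
  apply mul_left_cancel₀ (det_V0_ne_zero m)
  have l1 : (Matrix.of fun i k : Fin m => (X k : MvPolynomial (Fin m) ℤ) ^ (m - 1 - (i : ℕ))).det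
        * (esymm (Fin m) ℤ r * jacobiTrudi (Fin m) ℤ (fun i => (ν i : ℤ)))
      = esymm (Fin m) ℤ r
        * ((Matrix.of fun i k : Fin m =>
              (X k : MvPolynomial (Fin m) ℤ) ^ (m - 1 - (i : ℕ))).det
          * jacobiTrudi (Fin m) ℤ (fun i => (ν i : ℤ))) := by ring
  rw [l1, alt_jacobiTrudi, pieri_raw m r (fun i => ν i + (m - 1 - (i : ℕ))), Finset.mul_sum]
  rw [← Finset.sum_filter_add_sum_filter_not
    (Finset.powersetCard r (Finset.univ : Finset (Fin m)))
    (fun T => Antitone fun i => ν i + if i ∈ T then 1 else 0)]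
  have hbad : ∑ T ∈ (Finset.powersetCard r (Finset.univ : Finset (Fin m))).filter
      (fun T => ¬ Antitone fun i => ν i + if i ∈ T then 1 else 0),
      (Matrix.of fun i k : Fin m => (X k : MvPolynomial (Fin m) ℤ)
        ^ ((ν i + (m - 1 - (i : ℕ))) + if i ∈ T then 1 else 0)).det = 0 := by
    refine Finset.sum_eq_zero fun T hT => ?_
    rw [Finset.mem_filter] at hT
    exact bad_det_zero ν hν T hT.2
  rw [hbad, add_zero]
  refine Finset.sum_congr rfl fun T hT => ?_
  rw [alt_jacobiTrudi]
  refine congrArg Matrix.det (Matrix.ext fun i k => ?_)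
  simp only [Matrix.of_apply]
  have hexp : (ν i + (m - 1 - (i : ℕ))) + (if i ∈ T then 1 else 0)
      = (ν i + if i ∈ T then 1 else 0) + (m - 1 - (i : ℕ)) := by omega
  rw [hexp]

theorem hInt_map {S' : Type*} [CommRing S'] (f : R →+* S') (k : ℤ) :
    MvPolynomial.map f (hInt σ R k) = hInt σ S' k := by
  unfold hInt
  split
  · rw [map_hsymm]
  · rw [map_zero]

theorem jacobiTrudi_map {S' : Type*} [CommRing S'] (f : R →+* S') {l : ℕ} (α : Fin l → ℤ) :
    MvPolynomial.map f (jacobiTrudi σ R α) = jacobiTrudi σ S' α := by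
  unfold jacobiTrudi
  rw [RingHom.map_det]
  refine congrArg Matrix.det (Matrix.ext fun i j => ?_)
  simp only [RingHom.mapMatrix_apply, Matrix.map_apply, Matrix.of_apply]
  exact hInt_map f _

/-- The dual Pieri rule at full length `m`, over any commutative ring. -/
theorem pieri_m (m r : ℕ) (ν : Fin m → ℕ) (hν : Antitone ν) :
    esymm (Fin m) R r * jacobiTrudi (Fin m) R (fun i => (ν i : ℤ))
      = ∑ T ∈ (Finset.powersetCard r (Finset.univ : Finset (Fin m))).filter
            (fun T => Antitone fun i => ν i + if i ∈ T then 1 else 0),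
          jacobiTrudi (Fin m) R (fun i => ((ν i + if i ∈ T then 1 else 0 : ℕ) : ℤ)) := by
  have := congrArg (MvPolynomial.map (Int.castRingHom R)) (pieri_m_int m r ν hν)
  rw [map_mul, map_esymm, jacobiTrudi_map, map_sum] at this
  rw [this]
  exact Finset.sum_congr rfl fun T _ => jacobiTrudi_map _ _

theorem hInt_zero' : hInt σ R 0 = 1 := by
  unfold hInt
  rw [if_pos le_rfl]
  exact hsymm_zero σ R

theorem hInt_neg {k : ℤ} (h : k < 0) : hInt σ R k = 0 := by
  unfold hInt
  rw [if_neg (by omega)]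

/-- A trailing zero part can be removed from a Jacobi–Trudi polynomial. -/
theorem jacobiTrudi_pad_one {l : ℕ} (α : Fin (l + 1) → ℤ) (hα : α (Fin.last l) = 0) :
    jacobiTrudi σ R α = jacobiTrudi σ R (α ∘ Fin.castSucc) := by
  unfold jacobiTrudi
  rw [Matrix.det_succ_row _ (Fin.last l), Finset.sum_eq_single (Fin.last l)]
  · rw [Matrix.of_apply]
    have h1 : α (Fin.last l) + ((Fin.last l : Fin (l+1)) : ℕ) - ((Fin.last l : Fin (l+1)) : ℕ)
        = 0 := by rw [hα]; ring
    rw [h1, hInt_zero']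
    have h3 : ((-1 : MvPolynomial σ R))
        ^ (((Fin.last l : Fin (l+1)) : ℕ) + ((Fin.last l : Fin (l+1)) : ℕ)) = 1 :=
      Even.neg_one_pow ⟨(Fin.last l : Fin (l+1)) , rfl⟩
    rw [h3, one_mul, one_mul]
    congr 1
    refine Matrix.ext fun i j => ?_
    simp only [Matrix.submatrix_apply, Matrix.of_apply, Fin.succAbove_last,
      Function.comp_apply, Fin.coe_castSucc]
  · intro j _ hj
    have hjv : (j : ℕ) ≠ l := fun h => hj (Fin.ext (by simpa using h))
    have hneg : α (Fin.last l) + ((j : ℕ) : ℤ) - ((Fin.last l : Fin (l+1)) : ℕ) < 0 := by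
      rw [hα]
      have := j.isLt
      simp only [Fin.val_last]
      omega
    rw [Matrix.of_apply, hInt_neg hneg, mul_zero, zero_mul]
  · intro h
    exact absurd (Finset.mem_univ _) h

/-- Trailing zero parts can be removed from a Jacobi–Trudi polynomial. -/
theorem jacobiTrudi_pad (l : ℕ) : ∀ (k : ℕ) (α : Fin (l + k) → ℤ),
    (∀ i : Fin (l + k), l ≤ (i : ℕ) → α i = 0) →
    jacobiTrudi σ R α = jacobiTrudi σ R (fun i : Fin l => α (Fin.castLE (Nat.le_add_right l k) i))
  | 0, α, _ => rfl
  | (k + 1), α, hα => by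
    rw [jacobiTrudi_pad_one α (hα _ (by simp [Fin.last]))]
    rw [jacobiTrudi_pad l k (α ∘ Fin.castSucc)
      (fun i hi => hα _ (by rwa [Fin.coe_castSucc]))]
    rfl

/-- Two zero-padded versions of the same partition have the same Jacobi–Trudi polynomial. -/
theorem jacobiTrudi_congr_pad {l₁ l₂ : ℕ} (h : l₁ ≤ l₂) (α : Fin l₁ → ℤ) (β : Fin l₂ → ℤ)
    (h1 : ∀ i : Fin l₂, ∀ hi : (i : ℕ) < l₁, β i = α ⟨(i : ℕ), hi⟩)
    (h2 : ∀ i : Fin l₂, l₁ ≤ (i : ℕ) → β i = 0) :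
    jacobiTrudi σ R β = jacobiTrudi σ R α := by
  obtain ⟨k, rfl⟩ := Nat.exists_eq_add_of_le h
  rw [jacobiTrudi_pad l₁ k β h2]
  congr 1
  funext i
  rw [h1 _ (by simpa using i.isLt)]
  exact congrArg α (Fin.ext rfl)

/-- Vanishing: the Jacobi–Trudi polynomial of a partition with more than `m`
nonzero parts vanishes in `m` variables. -/
theorem jacobiTrudi_eq_zero (m : ℕ) : ∀ (l : ℕ) (ν : Fin l → ℕ), Antitone ν →
    ∀ i₀ : Fin l, m ≤ (i₀ : ℕ) → 1 ≤ ν i₀ →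
    jacobiTrudi (Fin m) R (fun i => (ν i : ℤ)) = 0
  | 0, ν, _, i₀, _, _ => i₀.elim0
  | (l' + 1), ν, hν, i₀, hm, hpos => by
    by_cases hlast : ν (Fin.last l') = 0
    · have hi₀v : (i₀ : ℕ) < l' := by
        rcases lt_or_eq_of_le (Nat.lt_succ_iff.mp i₀.isLt) with h | h
        · exact h
        · exfalso
          have : i₀ = Fin.last l' := Fin.ext (by simpa using h)
          rw [this, hlast] at hpos
          omega
      rw [jacobiTrudi_pad_one (fun i => (ν i : ℤ))
        (by show ((ν (Fin.last l')) : ℤ) = 0; exact_mod_cast hlast)]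
      have := jacobiTrudi_eq_zero m l' (ν ∘ Fin.castSucc)
        (hν.comp_monotone (fun a b hab => by
          rw [Fin.le_def] at hab ⊢
          simpa using hab)) ⟨(i₀ : ℕ), hi₀v⟩
        (by simpa using hm) (by
          have : (Fin.castSucc (⟨(i₀ : ℕ), hi₀v⟩ : Fin l')) = i₀ := Fin.ext rfl
          simpa [this] using hpos)
      exact this
    · -- all parts positive; multiply by the triangular `e`-matrix and find a zero column
      have hml : m ≤ l' := le_trans hm (Nat.lt_succ_iff.mp i₀.isLt)
      have hνpos : ∀ i : Fin (l' + 1), 1 ≤ ν i := fun i => by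
        have := hν (Fin.le_last i)
        omega
      set M : Matrix (Fin (l' + 1)) (Fin (l' + 1)) (MvPolynomial (Fin m) R) :=
        Matrix.of fun i j : Fin (l' + 1) => hInt (Fin m) R ((ν i : ℤ) + (j : ℕ) - (i : ℕ)) with hM
      set C : Matrix (Fin (l' + 1)) (Fin (l' + 1)) (MvPolynomial (Fin m) R) :=
        Matrix.of fun j k : Fin (l' + 1) => if (j : ℕ) ≤ (k : ℕ) then
          (-1 : MvPolynomial (Fin m) R) ^ ((k : ℕ) - (j : ℕ))
            * eZ (Fin m) R Finset.univ ((((k : ℕ) - (j : ℕ) : ℕ)) : ℤ) else 0 with hC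
      have hCdet : C.det = 1 := by
        have htri : C.BlockTriangular id := by
          intro a b hab
          rw [hC, Matrix.of_apply, if_neg (by exact Nat.not_le.mpr hab)]
        rw [Matrix.det_of_upperTriangular htri]
        refine Finset.prod_eq_one fun i _ => ?_
        rw [hC, Matrix.of_apply, if_pos le_rfl, Nat.sub_self, pow_zero, one_mul,
          Nat.cast_zero, eZ_zero]
      have hMC : (M * C).det = 0 := by
        apply Matrix.det_eq_zero_of_column_eq_zero (Fin.last l')
        intro i
        rw [Matrix.mul_apply]
        set g : ℕ → MvPolynomial (Fin m) R := fun t =>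
          hInt (Fin m) R ((ν i : ℤ) + (t : ℕ) - (i : ℕ))
            * ((-1 : MvPolynomial (Fin m) R) ^ (l' - t)
              * eZ (Fin m) R Finset.univ (((l' - t : ℕ)) : ℤ)) with hg
        have hterm : ∀ j ∈ (Finset.univ : Finset (Fin (l' + 1))), M i j * C j (Fin.last l')
            = g (j : ℕ) := by
          intro j _
          rw [hg, hM, hC, Matrix.of_apply, Matrix.of_apply,
            if_pos (by exact Nat.lt_succ_iff.mp j.isLt)]
          simp only [Fin.val_last]
        rw [Finset.sum_congr rfl hterm, Fin.sum_univ_eq_sum_range g (l' + 1),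
          ← Finset.sum_range_reflect]
        have hn : ∀ t ∈ Finset.range (l' + 1), g (l' + 1 - 1 - t)
              = (-1 : MvPolynomial (Fin m) R) ^ t * eZ (Fin m) R Finset.univ (t : ℤ)
                * hZ (Fin m) R Finset.univ (((ν i : ℤ) + (l' : ℕ) - (i : ℕ)) - t) := by
          intro t ht
          rw [Finset.mem_range] at ht
          rw [hg]
          simp only []
          have e1 : l' - (l' + 1 - 1 - t) = t := by omega
          rw [e1, hInt_eq_hZ]
          have e3 : (ν i : ℤ) + ((l' + 1 - 1 - t : ℕ) : ℤ) - ((i : ℕ) : ℤ)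
              = ((ν i : ℤ) + ((l' : ℕ) : ℤ) - ((i : ℕ) : ℤ)) - (t : ℤ) := by omega
          rw [e3]
          ring
        rw [Finset.sum_congr rfl hn]
        have := eh_identity_trunc (R := R) (Finset.univ : Finset (Fin m))
          (N := l') (by rw [Finset.card_univ, Fintype.card_fin]; exact hml)
          ((ν i : ℤ) + ((l' : ℕ) : ℤ) - ((i : ℕ) : ℤ))
        rw [this, if_neg]
        have h1 : 1 ≤ ν i := hνpos i
        have h2 : (i : ℕ) ≤ l' := Nat.lt_succ_iff.mp i.isLt
        omega
      have : M.det * C.det = 0 := by rw [← Matrix.det_mul, hMC]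
      rw [hCdet, mul_one] at this
      unfold jacobiTrudi
      exact this

theorem count_core {L m : ℕ} (p : ℕ → Prop) [DecidablePred p] (hp : ∀ n, p n → n < m ∧ n < L) :
    ∑ i : Fin L, (if p (i : ℕ) then (1 : ℕ) else 0)
      = ∑ i : Fin m, (if p (i : ℕ) then (1 : ℕ) else 0) := by
  rw [Fin.sum_univ_eq_sum_range (fun n => if p n then (1 : ℕ) else 0) L,
    Fin.sum_univ_eq_sum_range (fun n => if p n then (1 : ℕ) else 0) m]
  have key : ∀ K : ℕ, ∀ KK : ℕ, K ≤ KK → (∀ n, p n → n < K) →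
      ∑ n ∈ Finset.range K, (if p n then (1 : ℕ) else 0)
        = ∑ n ∈ Finset.range KK, (if p n then (1 : ℕ) else 0) := by
    intro K KK hKK hK
    refine Finset.sum_subset (Finset.range_subset_range.mpr hKK) fun n _ hn => ?_
    rw [Finset.mem_range, not_lt] at hn
    rw [if_neg fun hpn => by have := hK n hpn; omega]
  rw [key L (max L m) (le_max_left _ _) (fun n hn => (hp n hn).2),
    key m (max L m) (le_max_right _ _) (fun n hn => (hp n hn).1)]

theorem count_aux {L m r : ℕ} (f g : Fin L → ℕ)
    (hstrip : ∀ i, f i ≤ g i ∧ g i ≤ f i + 1) (hsum : ∑ i, (g i - f i) = r)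
    (hzero : ∀ i : Fin L, m ≤ (i : ℕ) → g i = 0) :
    (Finset.univ.filter
      (fun i : Fin m => ∃ h : (i : ℕ) < L, f ⟨(i : ℕ), h⟩ < g ⟨(i : ℕ), h⟩)).card = r := by
  classical
  set p : ℕ → Prop := fun n => ∃ h : n < L, f ⟨n, h⟩ < g ⟨n, h⟩ with hpdef
  have hp : ∀ n, p n → n < m ∧ n < L := by
    rintro n ⟨h, hfg⟩
    refine ⟨?_, h⟩
    by_contra hnm
    rw [hzero ⟨n, h⟩ (by show m ≤ n; omega)] at hfg
    omega
  rw [Finset.card_filter]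
  have h1 : ∑ i : Fin m, (if p (i : ℕ) then (1 : ℕ) else 0) = ∑ i : Fin L, (g i - f i) := by
    rw [← count_core p hp]
    refine Finset.sum_congr rfl fun i _ => ?_
    have : p (i : ℕ) ↔ f i < g i := by
      constructor
      · rintro ⟨h, hfg⟩
        exact hfg
      · intro h
        exact ⟨i.isLt, h⟩
    have hs := hstrip i
    by_cases h : f i < g i
    · rw [if_pos (this.mpr h)]; omega
    · rw [if_neg (fun hpn => h (this.mp hpn))]; omega
  rw [← hsum, ← h1]

theorem count_aux2 {L m : ℕ} (T : Finset (Fin m)) (hT : ∀ i ∈ T, (i : ℕ) < L) :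
    ∑ i : Fin L, (if ∃ h : (i : ℕ) < m, (⟨(i : ℕ), h⟩ : Fin m) ∈ T then (1 : ℕ) else 0)
      = T.card := by
  classical
  set p : ℕ → Prop := fun n => ∃ h : n < m, (⟨n, h⟩ : Fin m) ∈ T with hpdef
  have hp : ∀ n, p n → n < m ∧ n < L := by
    rintro n ⟨h, hmem⟩
    exact ⟨h, hT _ hmem⟩
  rw [count_core p hp]
  have : ∀ i : Fin m, (if p (i : ℕ) then (1 : ℕ) else 0) = if i ∈ T then 1 else 0 := by
    intro i
    congr 1
    simp only [eq_iff_iff]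
    constructor
    · rintro ⟨h, hmem⟩
      exact hmem
    · intro h
      exact ⟨i.isLt, h⟩
  rw [Finset.sum_congr rfl fun i _ => this i, ← Finset.card_filter, Finset.filter_mem_eq_inter,
    Finset.univ_inter]

theorem good_support {m l r : ℕ} (ν : Fin m → ℕ) (hνl : ∀ i : Fin m, l ≤ (i : ℕ) → ν i = 0)
    (T : Finset (Fin m)) (hcard : T.card = r)
    (hanti : Antitone fun i => ν i + if i ∈ T then 1 else 0) :
    ∀ i ∈ T, (i : ℕ) < l + r := by
  by_contra hcon
  push_neg at hcon
  obtain ⟨i₀, hi₀T, hi₀⟩ := hcon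
  have hsub : ∀ t, t ≤ r → ∀ h : l + t < m, (⟨l + t, h⟩ : Fin m) ∈ T := by
    intro t ht h
    have hle : (⟨l + t, h⟩ : Fin m) ≤ i₀ := by
      rw [Fin.le_def]
      simp only []
      omega
    have := hanti hle
    simp only [] at this
    rw [hνl i₀ (by omega), hνl ⟨l + t, h⟩ (by simp), if_pos hi₀T] at this
    by_contra hmem
    rw [if_neg hmem] at this
    omega
  have hinj : (Finset.range (r + 1)).card ≤ T.card := by
    refine Finset.card_le_card_of_injOn
      (fun t => (⟨min (l + t) (i₀ : ℕ), lt_of_le_of_lt (min_le_right _ _) i₀.isLt⟩ : Fin m))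
      ?_ ?_
    · intro t ht
      rw [Finset.mem_coe, Finset.mem_range] at ht
      rw [Finset.mem_coe]
      have hmin : min (l + t) (i₀ : ℕ) = l + t := by omega
      have h : l + t < m := by
        have := i₀.isLt
        omega
      have := hsub t (by omega) h
      convert this using 2
    · intro a ha b hb hab
      rw [Finset.mem_coe, Finset.mem_range] at ha hb
      have := congrArg Fin.val hab
      simp only [] at this
      omega
  rw [Finset.card_range, hcard] at hinj
  omega

end DualPieriAux

/-- **Dual Pieri rule.**  For a partition `μ` (with `l` parts, padded by zeros to length
`l + r`) and `r ≥ 0`, `e_r ⬝ s_μ = Σ_λ s_λ`, summed over all partitions `λ ⊇ μ` with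
`λ/μ` a vertical strip of size `r` and `ℓ(λ) ≤ m`.  (Any such `λ` has at most `l + r`
parts and satisfies `λ_i ≤ μ_i + 1`, so the indexing finite set captures all of them.) -/
theorem dual_pieri_rule (R : Type*) [CommRing R] (m l : ℕ)
    (μ : Fin l → ℕ) (hμ : Antitone μ) (r : ℕ)
    (μ' : Fin (l + r) → ℕ)
    (hμ'₁ : ∀ i : Fin (l + r), ∀ h : (i : ℕ) < l, μ' i = μ ⟨i, h⟩)
    (hμ'₂ : ∀ i : Fin (l + r), l ≤ (i : ℕ) → μ' i = 0) :
    (esymm (Fin m) R r) * jacobiTrudi (Fin m) R (fun i => (μ i : ℤ)) =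
      ∑ lam ∈ (Finset.Iic (fun i => μ' i + 1)).filter
          (fun lam : Fin (l + r) → ℕ => Antitone lam ∧
            IsVerticalStrip lam μ' ∧
            (∑ i, (lam i - μ' i)) = r ∧
            ∀ i : Fin (l + r), m ≤ (i : ℕ) → lam i = 0),
        jacobiTrudi (Fin m) R (fun i => (lam i : ℤ)) := by
  classical
  by_cases hcase : ∀ i : Fin l, m ≤ (i : ℕ) → μ i = 0
  · have hμ'anti : Antitone μ' := by
      intro i j hij
      by_cases hj : (j : ℕ) < l
      · have hij' : (i : ℕ) ≤ (j : ℕ) := hij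
        have hi : (i : ℕ) < l := by omega
        rw [hμ'₁ i hi, hμ'₁ j hj]
        exact hμ (by rw [Fin.mk_le_mk]; exact hij')
      · rw [hμ'₂ j (by omega)]
        exact Nat.zero_le _
    have hμ'0 : ∀ i : Fin (l + r), m ≤ (i : ℕ) → μ' i = 0 := by
      intro i hi
      by_cases h : (i : ℕ) < l
      · rw [hμ'₁ i h]
        exact hcase ⟨(i : ℕ), h⟩ hi
      · exact hμ'₂ i (by omega)
    set ν : Fin m → ℕ :=
      fun i => if h : (i : ℕ) < l + r then μ' ⟨(i : ℕ), h⟩ else 0 with hνdef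
    have hν1 : ∀ (i : Fin m) (h : (i : ℕ) < l + r), ν i = μ' ⟨(i : ℕ), h⟩ :=
      fun i h => dif_pos h
    have hν2 : ∀ i : Fin m, l + r ≤ (i : ℕ) → ν i = 0 := fun i h => dif_neg (by omega)
    have hν : Antitone ν := by
      intro i j hij
      have hij' : (i : ℕ) ≤ (j : ℕ) := hij
      by_cases hj : (j : ℕ) < l + r
      · have hi : (i : ℕ) < l + r := by omega
        rw [hν1 i hi, hν1 j hj]
        exact hμ'anti (by rw [Fin.mk_le_mk]; exact hij')
      · rw [hν2 j (by omega)]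
        exact Nat.zero_le _
    have hνl : ∀ i : Fin m, l ≤ (i : ℕ) → ν i = 0 := by
      intro i hi
      by_cases h : (i : ℕ) < l + r
      · rw [hν1 i h]
        exact hμ'₂ ⟨(i : ℕ), h⟩ hi
      · exact hν2 i (by omega)
    have s1 : jacobiTrudi (Fin m) R (fun i : Fin (l + r) => (μ' i : ℤ))
        = jacobiTrudi (Fin m) R (fun i : Fin l => (μ i : ℤ)) :=
      jacobiTrudi_congr_pad (Nat.le_add_right l r) _ _
        (fun i hi => by show ((μ' i : ℕ) : ℤ) = ((μ ⟨(i : ℕ), hi⟩ : ℕ) : ℤ); rw [hμ'₁ i hi])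
        (fun i hi => by show ((μ' i : ℕ) : ℤ) = 0; rw [hμ'₂ i hi]; rfl)
    have s2 : jacobiTrudi (Fin m) R (fun i : Fin (l + r) => (μ' i : ℤ))
        = jacobiTrudi (Fin m) R (fun i : Fin m => (ν i : ℤ)) := by
      rcases le_total m (l + r) with hml | hml
      · refine jacobiTrudi_congr_pad hml _ _ (fun i hi => ?_) (fun i hi => ?_)
        · show ((μ' i : ℕ) : ℤ) = ((ν ⟨(i : ℕ), hi⟩ : ℕ) : ℤ)
          rw [hν1 ⟨(i : ℕ), hi⟩ (show ((⟨(i : ℕ), hi⟩ : Fin m) : ℕ) < l + r from i.isLt)]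
        · show ((μ' i : ℕ) : ℤ) = 0
          rw [hμ'0 i hi]
          rfl
      · refine (jacobiTrudi_congr_pad hml _ _ (fun i hi => ?_) (fun i hi => ?_)).symm
        · show ((ν i : ℕ) : ℤ) = ((μ' ⟨(i : ℕ), hi⟩ : ℕ) : ℤ)
          rw [hν1 i hi]
        · show ((ν i : ℕ) : ℤ) = 0
          rw [hν2 i hi]
          rfl
    rw [← s1, s2, pieri_m m r ν hν]
    set bwd : Finset (Fin m) → (Fin (l + r) → ℕ) := fun T i =>
      if h : (i : ℕ) < m then ν ⟨(i : ℕ), h⟩ + (if (⟨(i : ℕ), h⟩ : Fin m) ∈ T then 1 else 0)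
      else 0 with hbwd
    set fwd : (Fin (l + r) → ℕ) → Finset (Fin m) := fun lam =>
      Finset.univ.filter
        (fun i : Fin m => ∃ h : (i : ℕ) < l + r, μ' ⟨(i : ℕ), h⟩ < lam ⟨(i : ℕ), h⟩) with hfwd
    refine Finset.sum_nbij' bwd fwd ?_ ?_ ?_ ?_ ?_
    · -- bwd maps Q into P
      intro T hT
      rw [Finset.mem_filter, Finset.mem_powersetCard_univ] at hT
      obtain ⟨hcardT, hgood⟩ := hT
      have hsupp := good_support ν hνl T hcardT hgood
      rw [Finset.mem_filter]
      refine ⟨Finset.mem_Iic.mpr ?_, ?_, ?_, ?_, ?_⟩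
      · intro i
        show bwd T i ≤ μ' i + 1
        rw [hbwd]
        simp only []
        by_cases h : (i : ℕ) < m
        · rw [dif_pos h, hν1 ⟨(i : ℕ), h⟩ (show ((⟨(i : ℕ), h⟩ : Fin m) : ℕ) < l + r from i.isLt)]
          have : (if (⟨(i : ℕ), h⟩ : Fin m) ∈ T then 1 else 0) ≤ 1 := by split <;> omega
          have he : (⟨((⟨(i : ℕ), h⟩ : Fin m) : ℕ), i.isLt⟩ : Fin (l + r)) = i := rfl
          rw [he]
          omega
        · rw [dif_neg h]
          omega
      · intro i j hij
        have hij' : (i : ℕ) ≤ (j : ℕ) := hij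
        show bwd T j ≤ bwd T i
        rw [hbwd]
        simp only []
        by_cases hj : (j : ℕ) < m
        · have hi : (i : ℕ) < m := by omega
          rw [dif_pos hi, dif_pos hj]
          exact hgood (show (⟨(i : ℕ), hi⟩ : Fin m) ≤ ⟨(j : ℕ), hj⟩ by
            rw [Fin.mk_le_mk]; exact hij')
        · rw [dif_neg hj]
          omega
      · intro i
        show μ' i ≤ bwd T i ∧ bwd T i ≤ μ' i + 1
        rw [hbwd]
        simp only []
        by_cases h : (i : ℕ) < m
        · rw [dif_pos h, hν1 ⟨(i : ℕ), h⟩ (show ((⟨(i : ℕ), h⟩ : Fin m) : ℕ) < l + r from i.isLt)]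
          have he : (⟨((⟨(i : ℕ), h⟩ : Fin m) : ℕ), i.isLt⟩ : Fin (l + r)) = i := rfl
          rw [he]
          constructor
          · omega
          · have : (if (⟨(i : ℕ), h⟩ : Fin m) ∈ T then 1 else 0) ≤ 1 := by split <;> omega
            omega
        · rw [dif_neg h, hμ'0 i (by omega)]
          omega
      · have hpt : ∀ i : Fin (l + r), bwd T i - μ' i
            = if (∃ h : (i : ℕ) < m, (⟨(i : ℕ), h⟩ : Fin m) ∈ T) then (1 : ℕ) else 0 := by
          intro i
          rw [hbwd]
          simp only []
          by_cases h : (i : ℕ) < m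
          · rw [dif_pos h,
              hν1 ⟨(i : ℕ), h⟩ (show ((⟨(i : ℕ), h⟩ : Fin m) : ℕ) < l + r from i.isLt)]
            have he : (⟨((⟨(i : ℕ), h⟩ : Fin m) : ℕ), i.isLt⟩ : Fin (l + r)) = i := rfl
            rw [he]
            have hiff : (∃ h' : (i : ℕ) < m, (⟨(i : ℕ), h'⟩ : Fin m) ∈ T)
                ↔ (⟨(i : ℕ), h⟩ : Fin m) ∈ T := ⟨fun ⟨_, hm'⟩ => hm', fun hm' => ⟨h, hm'⟩⟩
            rw [if_congr hiff rfl rfl]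
            split <;> omega
          · rw [dif_neg h, hμ'0 i (by omega), if_neg (fun ⟨h', _⟩ => h h')]
        show (∑ i, (bwd T i - μ' i)) = r
        rw [Finset.sum_congr rfl fun i _ => hpt i, count_aux2 T hsupp, hcardT]
      · intro i hi
        show bwd T i = 0
        rw [hbwd]
        simp only []
        rw [dif_neg (by omega)]
    · -- fwd maps P into Q
      intro lam hlam
      rw [Finset.mem_filter, Finset.mem_Iic] at hlam
      obtain ⟨hIic, hanti, hstrip, hsum, hzero⟩ := hlam
      rw [Finset.mem_filter, Finset.mem_powersetCard_univ]
      have hpt : ∀ i : Fin m, ν i + (if i ∈ fwd lam then 1 else 0)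
          = if h : (i : ℕ) < l + r then lam ⟨(i : ℕ), h⟩ else 0 := by
        intro i
        have hmem : i ∈ fwd lam
            ↔ ∃ h : (i : ℕ) < l + r, μ' ⟨(i : ℕ), h⟩ < lam ⟨(i : ℕ), h⟩ := by
          rw [hfwd]
          simp only [Finset.mem_filter, Finset.mem_univ, true_and]
        by_cases h : (i : ℕ) < l + r
        · rw [dif_pos h, hν1 i h]
          have hs := hstrip ⟨(i : ℕ), h⟩
          by_cases hlt : μ' ⟨(i : ℕ), h⟩ < lam ⟨(i : ℕ), h⟩
          · rw [if_pos (hmem.mpr ⟨h, hlt⟩)]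
            omega
          · rw [if_neg (fun hm' => hlt (by obtain ⟨h', hlt'⟩ := hmem.mp hm'; exact hlt'))]
            omega
        · rw [dif_neg h, hν2 i (by omega),
            if_neg (fun hm' => h (by obtain ⟨h', _⟩ := hmem.mp hm'; exact h'))]
      constructor
      · exact count_aux μ' lam hstrip hsum hzero
      · intro i j hij
        have hij' : (i : ℕ) ≤ (j : ℕ) := hij
        show ν j + (if j ∈ fwd lam then 1 else 0) ≤ ν i + (if i ∈ fwd lam then 1 else 0)
        rw [hpt i, hpt j]
        by_cases hj : (j : ℕ) < l + r
        · have hi : (i : ℕ) < l + r := by omega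
          rw [dif_pos hi, dif_pos hj]
          exact hanti (show (⟨(i : ℕ), hi⟩ : Fin (l + r)) ≤ ⟨(j : ℕ), hj⟩ by
            rw [Fin.mk_le_mk]; exact hij')
        · rw [dif_neg hj]
          omega
    · -- fwd (bwd T) = T
      intro T hT
      rw [Finset.mem_filter, Finset.mem_powersetCard_univ] at hT
      obtain ⟨hcardT, hgood⟩ := hT
      have hsupp := good_support ν hνl T hcardT hgood
      ext i
      rw [hfwd]
      simp only [Finset.mem_filter, Finset.mem_univ, true_and]
      constructor
      · rintro ⟨h, hlt⟩
        rw [hbwd] at hlt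
        simp only [] at hlt
        rw [dif_pos (show ((⟨(i : ℕ), h⟩ : Fin (l + r)) : ℕ) < m from i.isLt)] at hlt
        have he1 : (⟨((⟨(i : ℕ), h⟩ : Fin (l + r)) : ℕ), i.isLt⟩ : Fin m) = i := rfl
        rw [he1, ← hν1 i h] at hlt
        by_contra hmem
        rw [if_neg hmem] at hlt
        omega
      · intro hmem
        have h : (i : ℕ) < l + r := hsupp i hmem
        refine ⟨h, ?_⟩
        rw [hbwd]
        simp only []
        rw [dif_pos (show ((⟨(i : ℕ), h⟩ : Fin (l + r)) : ℕ) < m from i.isLt)]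
        have he1 : (⟨((⟨(i : ℕ), h⟩ : Fin (l + r)) : ℕ), i.isLt⟩ : Fin m) = i := rfl
        rw [he1, ← hν1 i h, if_pos hmem]
        omega
    · -- bwd (fwd lam) = lam
      intro lam hlam
      rw [Finset.mem_filter, Finset.mem_Iic] at hlam
      obtain ⟨hIic, hanti, hstrip, hsum, hzero⟩ := hlam
      funext i
      rw [hbwd]
      simp only []
      by_cases h : (i : ℕ) < m
      · rw [dif_pos h]
        have hmem : (⟨(i : ℕ), h⟩ : Fin m) ∈ fwd lam
            ↔ ∃ h' : (i : ℕ) < l + r, μ' ⟨(i : ℕ), h'⟩ < lam ⟨(i : ℕ), h'⟩ := by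
          rw [hfwd]
          simp only [Finset.mem_filter, Finset.mem_univ, true_and]
        have hilr : (i : ℕ) < l + r := i.isLt
        have he2 : (⟨((⟨(i : ℕ), h⟩ : Fin m) : ℕ), hilr⟩ : Fin (l + r)) = i := rfl
        rw [hν1 ⟨(i : ℕ), h⟩ (show ((⟨(i : ℕ), h⟩ : Fin m) : ℕ) < l + r from hilr), he2]
        have hs := hstrip i
        by_cases hlt : μ' i < lam i
        · rw [if_pos (hmem.mpr ⟨hilr, hlt⟩)]
          omega
        · rw [if_neg (fun hm' => hlt (by
            obtain ⟨h', hlt'⟩ := hmem.mp hm'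
            exact hlt'))]
          omega
      · rw [dif_neg h, hzero i (by omega)]
    · -- summand equality
      intro T hT
      rw [Finset.mem_filter, Finset.mem_powersetCard_univ] at hT
      obtain ⟨hcardT, hgood⟩ := hT
      have hsupp := good_support ν hνl T hcardT hgood
      have hlam0 : ∀ i : Fin m, l + r ≤ (i : ℕ) → ν i + (if i ∈ T then 1 else 0) = 0 := by
        intro i hi
        rw [hν2 i hi, if_neg (fun hmem => by have := hsupp i hmem; omega)]
      have hagree : ∀ (i : Fin (l + r)) (h : (i : ℕ) < m),
          bwd T i = ν ⟨(i : ℕ), h⟩ + (if (⟨(i : ℕ), h⟩ : Fin m) ∈ T then 1 else 0) := by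
        intro i h
        rw [hbwd]
        simp only []
        rw [dif_pos h]
      rcases le_total m (l + r) with hml | hml
      · have h1 : ∀ (i : Fin (l + r)) (hi : (i : ℕ) < m),
            ((bwd T i : ℕ) : ℤ)
              = ((ν ⟨(i : ℕ), hi⟩ + if (⟨(i : ℕ), hi⟩ : Fin m) ∈ T then 1 else 0 : ℕ) : ℤ) := by
          intro i hi
          rw [hagree i hi]
        have h2 : ∀ i : Fin (l + r), m ≤ (i : ℕ) → ((bwd T i : ℕ) : ℤ) = 0 := by
          intro i hi
          rw [hbwd]
          simp only []
          rw [dif_neg (by omega)]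
          rfl
        exact (jacobiTrudi_congr_pad hml
          (fun i : Fin m => ((ν i + if i ∈ T then 1 else 0 : ℕ) : ℤ))
          (fun i : Fin (l + r) => ((bwd T i : ℕ) : ℤ)) h1 h2).symm
      · have h1 : ∀ (i : Fin m) (hi : (i : ℕ) < l + r),
            ((ν i + if i ∈ T then 1 else 0 : ℕ) : ℤ)
              = ((bwd T ⟨(i : ℕ), hi⟩ : ℕ) : ℤ) := by
          intro i hi
          rw [hagree ⟨(i : ℕ), hi⟩ (show ((⟨(i : ℕ), hi⟩ : Fin (l + r)) : ℕ) < m from i.isLt)]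
        have h2 : ∀ i : Fin m, l + r ≤ (i : ℕ) →
            ((ν i + if i ∈ T then 1 else 0 : ℕ) : ℤ) = 0 := by
          intro i hi
          rw [hlam0 i hi]
          rfl
        exact jacobiTrudi_congr_pad hml
          (fun i : Fin (l + r) => ((bwd T i : ℕ) : ℤ))
          (fun i : Fin m => ((ν i + if i ∈ T then 1 else 0 : ℕ) : ℤ)) h1 h2
  · -- degenerate case
    push_neg at hcase
    obtain ⟨i0, hi0m, hi0⟩ := hcase
    rw [jacobiTrudi_eq_zero m l μ hμ i0 hi0m (by omega), mul_zero]
    symm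
    refine Finset.sum_eq_zero fun lam hlam => ?_
    exfalso
    rw [Finset.mem_filter] at hlam
    obtain ⟨hIic, hanti, hstrip, hsum, hzero⟩ := hlam
    have hlt : (i0 : ℕ) < l + r := by have := i0.isLt; omega
    have h1 : μ' ⟨(i0 : ℕ), hlt⟩ = μ i0 := hμ'₁ ⟨(i0 : ℕ), hlt⟩ i0.isLt
    have h2 := (hstrip ⟨(i0 : ℕ), hlt⟩).1
    have h3 := hzero ⟨(i0 : ℕ), hlt⟩ (by exact hi0m)
    omega
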